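/- Let q be a prime power, let C₃ be a set of exactly q^8 + q^6 + q^5 + q^3 three-dimensional subspaces (planes) of 𝔽_q^7 such that any two distinct members intersect in a subspace of dimension at most 1, and let P be a one-dimensional subspace (point) of 𝔽_q^7 contained in no member of C₃. Then every one-dimensional subspace Q ≠ P of 𝔽_q^7 is contained in exactly q^4 + q^2 members of C₃. -/

import Mathlib

open scoped Classical

/-- The subspace distance `d_S(X,Y) = dim(X+Y) - dim(X∩Y)` between two subspaces. -/
noncomputable def subspaceDist {F V : Type*} [Field F] [AddCommGroup V] [Module F V]
    (X Y : Submodule F V) : ℕ :=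
  Module.finrank F ↥(X ⊔ Y) - Module.finrank F ↥(X ⊓ Y)

/-- `C` is a subspace code with minimum subspace distance at least `d`. -/
def IsSubspaceCode {F V : Type*} [Field F] [AddCommGroup V] [Module F V]
    (d : ℕ) (C : Finset (Submodule F V)) : Prop :=
  ∀ X ∈ C, ∀ Y ∈ C, X ≠ Y → d ≤ subspaceDist X Y

/-- `A_q(v,d)`: the maximum cardinality of a subspace code in `F^v` (where `#F = q`)
with minimum subspace distance at least `d`. -/
noncomputable def maxCode (F : Type*) [Field F] [Fintype F] (v d : ℕ) : ℕ :=
  sSup {n | ∃ C : Finset (Submodule F (Fin v → F)), IsSubspaceCode d C ∧ C.card = n}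

/-- `A_q(v,d;k)`: the maximum cardinality of a constant dimension code in `F^v`
(where `#F = q`) with minimum subspace distance at least `d` and all codewords of
dimension `k`. -/
noncomputable def maxCodeDim (F : Type*) [Field F] [Fintype F] (v d k : ℕ) : ℕ :=
  sSup {n | ∃ C : Finset (Submodule F (Fin v → F)), IsSubspaceCode d C ∧
    (∀ X ∈ C, Module.finrank F ↥X = k) ∧ C.card = n}

/-- `[x]_q = (q^x - 1)/(q - 1)`, the number of points of `PG(F_q^x)`. -/
def gaussNum (q x : ℕ) : ℕ := ∑ i ∈ Finset.range x, q ^ i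

open Finset Module

section AuxLemmas

lemma geom_mul_aux (q : ℕ) (hq : 1 ≤ q) (n : ℕ) :
    (∑ i ∈ Finset.range n, q ^ i) * (q - 1) + 1 = q ^ n := by
  obtain ⟨p, rfl⟩ : ∃ p, q = p + 1 := ⟨q - 1, by omega⟩
  induction n with
  | zero => simp
  | succ n ih =>
    rw [Finset.sum_range_succ, add_mul, pow_succ, ← ih]
    simp only [Nat.add_sub_cancel]
    ring

variable {F : Type*} [Field F] [Fintype F] {V : Type*} [AddCommGroup V] [Module F V] [Fintype V]

noncomputable instance : Fintype (Submodule F V) :=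
  Fintype.ofFinite _

lemma card_filter_mem (W : Submodule F V) :
    (Finset.univ.filter (fun v : V => v ∈ W)).card = Fintype.card F ^ finrank F ↥W := by
  rw [← Fintype.card_subtype]
  exact card_eq_pow_finrank

lemma card_filter_mem_ne_zero (W : Submodule F V) :
    (Finset.univ.filter (fun v : V => v ∈ W ∧ v ≠ 0)).card
      = Fintype.card F ^ finrank F ↥W - 1 := by
  have h : Finset.univ.filter (fun v : V => v ∈ W ∧ v ≠ 0)
      = (Finset.univ.filter (fun v : V => v ∈ W)).erase 0 := by
    ext v
    simp [Finset.mem_erase, and_comm]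
  rw [h, Finset.card_erase_of_mem (by simp [W.zero_mem]), card_filter_mem]

lemma points_mul (W : Submodule F V) :
    ((Finset.univ.filter
        (fun R : Submodule F V => finrank F ↥R = 1 ∧ R ≤ W)).card) * (Fintype.card F - 1)
      = Fintype.card F ^ finrank F ↥W - 1 := by
  classical
  set S := Finset.univ.filter (fun v : V => v ∈ W ∧ v ≠ 0) with hS
  set t := Finset.univ.filter (fun R : Submodule F V => finrank F ↥R = 1 ∧ R ≤ W) with ht
  have hcf : S.card = ∑ R ∈ t, (S.filter (fun v => Submodule.span F {v} = R)).card := by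
    apply Finset.card_eq_sum_card_fiberwise
    intro v hv
    simp only [hS, ht, Finset.mem_coe, Finset.mem_filter, Finset.mem_univ, true_and] at hv ⊢
    exact ⟨finrank_span_singleton hv.2, Submodule.span_le.2 (by simpa using hv.1)⟩
  have hfib : ∀ R ∈ t, (S.filter (fun v => Submodule.span F {v} = R)).card
      = Fintype.card F - 1 := by
    intro R hR
    simp only [ht, Finset.mem_filter, Finset.mem_univ, true_and] at hR
    obtain ⟨hR1, hRW⟩ := hR
    have heq : S.filter (fun v => Submodule.span F {v} = R)
        = Finset.univ.filter (fun v : V => v ∈ R ∧ v ≠ 0) := by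
      ext v
      simp only [hS, Finset.mem_filter, Finset.mem_univ, true_and]
      constructor
      · rintro ⟨⟨hW, h0⟩, hsp⟩
        exact ⟨hsp ▸ Submodule.mem_span_singleton_self v, h0⟩
      · rintro ⟨hvR, h0⟩
        have hle : Submodule.span F {v} ≤ R := Submodule.span_le.2 (by simpa using hvR)
        have hsp : Submodule.span F {v} = R :=
          Submodule.eq_of_le_of_finrank_le hle
            (by rw [finrank_span_singleton h0, hR1])
        exact ⟨⟨hRW hvR, h0⟩, hsp⟩
    rw [heq, card_filter_mem_ne_zero, hR1, pow_one]
  rw [Finset.sum_congr rfl hfib, Finset.sum_const, smul_eq_mul] at hcf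
  rw [← hcf, hS, card_filter_mem_ne_zero]

lemma points_count (W : Submodule F V) (hq : 2 ≤ Fintype.card F) :
    (Finset.univ.filter
        (fun R : Submodule F V => finrank F ↥R = 1 ∧ R ≤ W)).card
      = ∑ i ∈ Finset.range (finrank F ↥W), Fintype.card F ^ i := by
  have h1 := points_mul W
  have h2 := geom_mul_aux (Fintype.card F) (by omega) (finrank F ↥W)
  have h3 : (∑ i ∈ Finset.range (finrank F ↥W), Fintype.card F ^ i) * (Fintype.card F - 1)
      = Fintype.card F ^ finrank F ↥W - 1 := by omega
  exact Nat.eq_of_mul_eq_mul_right (by omega) (h1.trans h3.symm)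

end AuxLemmas


/-- If C₃ consists of exactly q^8+q^6+q^5+q^3 planes of F_q^7 pairwise intersecting
in dimension at most 1 and the point P lies in no member of C₃, then every point
Q ≠ P lies on exactly q^4 + q^2 members of C₃. -/
theorem planes_through_point_eq (q : ℕ) (F : Type*) [Field F] [Fintype F]
    (hF : Fintype.card F = q) (C₃ : Finset (Submodule F (Fin 7 → F)))
    (hdim : ∀ X ∈ C₃, Module.finrank F ↥X = 3)
    (hint : ∀ X ∈ C₃, ∀ Y ∈ C₃, X ≠ Y → Module.finrank F ↥(X ⊓ Y) ≤ 1)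
    (hcard : C₃.card = q ^ 8 + q ^ 6 + q ^ 5 + q ^ 3)
    (P : Submodule F (Fin 7 → F)) (hP : Module.finrank F ↥P = 1)
    (hPfree : ∀ X ∈ C₃, ¬ P ≤ X) :
    ∀ Q : Submodule F (Fin 7 → F), Module.finrank F ↥Q = 1 → Q ≠ P →
      (C₃.filter fun X => Q ≤ X).card = q ^ 4 + q ^ 2 := by
  classical
  set V := Fin 7 → F with hV
  have hq2 : 2 ≤ q := hF ▸ Fintype.one_lt_card
  have hcardV : Fintype.card V = q ^ 7 := by
    show Fintype.card (Fin 7 → F) = q ^ 7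
    simp [hF]
  have hrankV : finrank F V = 7 := by
    show finrank F (Fin 7 → F) = 7
    simp [Module.finrank_fin_fun]
  -- the set of points
  set pts := Finset.univ.filter (fun R : Submodule F V => finrank F ↥R = 1) with hpts
  -- number of points of a plane in C₃
  have hplanepts : ∀ X ∈ C₃, (pts.filter (fun R => R ≤ X)).card
      = ∑ i ∈ Finset.range 3, q ^ i := by
    intro X hX
    have h := points_count (F := F) X (by omega : 2 ≤ Fintype.card F)
    rw [hdim X hX, hF] at h
    rw [hpts, Finset.filter_filter]
    exact h
  -- the double counting identity
  have hsum : ∑ R ∈ pts, (C₃.filter fun X => R ≤ X).card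
      = C₃.card * (∑ i ∈ Finset.range 3, q ^ i) := by
    calc ∑ R ∈ pts, (C₃.filter fun X => R ≤ X).card
        = ∑ R ∈ pts, ∑ X ∈ C₃, if R ≤ X then 1 else 0 := by
          refine Finset.sum_congr rfl fun R _ => ?_
          rw [Finset.card_filter]
      _ = ∑ X ∈ C₃, ∑ R ∈ pts, if R ≤ X then 1 else 0 := Finset.sum_comm
      _ = ∑ X ∈ C₃, (pts.filter (fun R => R ≤ X)).card := by
          refine Finset.sum_congr rfl fun X _ => ?_
          rw [Finset.card_filter]
      _ = ∑ _X ∈ C₃, (∑ i ∈ Finset.range 3, q ^ i) :=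
          Finset.sum_congr rfl hplanepts
      _ = C₃.card * (∑ i ∈ Finset.range 3, q ^ i) := by
          rw [Finset.sum_const, smul_eq_mul]
  -- upper bound on the number of planes through a point ≠ P
  have hub : ∀ R : Submodule F V, finrank F ↥R = 1 → R ≠ P →
      (C₃.filter fun X => R ≤ X).card ≤ q ^ 4 + q ^ 2 := by
    intro R hR1 hRP
    set T := C₃.filter (fun X => R ≤ X) with hT
    have hmeet : ∀ X ∈ T, ∀ Y ∈ T, X ≠ Y → X ⊓ Y = R := by
      intro X hX Y hY hXY
      have hX' := Finset.mem_filter.1 hX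
      have hY' := Finset.mem_filter.1 hY
      refine (Submodule.eq_of_le_of_finrank_le (le_inf hX'.2 hY'.2) ?_).symm
      rw [hR1]
      exact hint X hX'.1 Y hY'.1 hXY
    set D : Submodule F V → Finset V :=
      fun X => Finset.univ.filter (fun v => v ∈ X ∧ v ∉ R) with hD
    have hDcard : ∀ X ∈ T, (D X).card = q ^ 3 - q := by
      intro X hX
      have hX' := Finset.mem_filter.1 hX
      have hsd : D X = (Finset.univ.filter (fun v : V => v ∈ X))
          \ (Finset.univ.filter (fun v : V => v ∈ R)) := by
        ext v
        simp [hD, Finset.mem_sdiff]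
      rw [hsd, Finset.card_sdiff_of_subset (by
        intro v hv
        simp only [Finset.mem_filter, Finset.mem_univ, true_and] at hv ⊢
        exact hX'.2 hv)]
      rw [card_filter_mem, card_filter_mem, hdim X hX'.1, hR1, hF, pow_one]
    have hdisj : ∀ X ∈ T, ∀ Y ∈ T, X ≠ Y → Disjoint (D X) (D Y) := by
      intro X hX Y hY hXY
      rw [Finset.disjoint_left]
      intro v hvX hvY
      simp only [hD, Finset.mem_filter, Finset.mem_univ, true_and] at hvX hvY
      exact hvX.2 ((hmeet X hX Y hY hXY) ▸ (Submodule.mem_inf.2 ⟨hvX.1, hvY.1⟩))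
    have hcb : (T.biUnion D).card = T.card * (q ^ 3 - q) := by
      rw [Finset.card_biUnion hdisj, Finset.sum_congr rfl hDcard,
        Finset.sum_const, smul_eq_mul]
    have hsub : T.biUnion D ⊆
        Finset.univ.filter (fun v : V => v ∉ R ∧ v ∉ P) := by
      intro v hv
      obtain ⟨X, hX, hvX⟩ := Finset.mem_biUnion.1 hv
      simp only [hD, Finset.mem_filter, Finset.mem_univ, true_and] at hvX ⊢
      refine ⟨hvX.2, fun hvP => ?_⟩
      have hv0 : v ≠ 0 := fun h => hvX.2 (h ▸ R.zero_mem)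
      have hsp : Submodule.span F {v} = P :=
        Submodule.eq_of_le_of_finrank_le (Submodule.span_le.2 (by simpa using hvP))
          (by rw [finrank_span_singleton hv0, hP])
      exact hPfree X (Finset.mem_filter.1 hX).1
        (hsp ▸ Submodule.span_le.2 (by simpa using hvX.1))
    -- R ⊓ P = ⊥
    have hRPbot : R ⊓ P = ⊥ := by
      rw [← Submodule.finrank_eq_zero (R := F) (S := R ⊓ P)]
      by_contra h0
      have hle : finrank F ↥(R ⊓ P) ≤ 1 := hR1 ▸ Submodule.finrank_mono inf_le_left
      have hinf : R ⊓ P = R :=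
        Submodule.eq_of_le_of_finrank_le inf_le_left (by omega)
      have hRleP : R ≤ P := hinf ▸ inf_le_right
      exact hRP (Submodule.eq_of_le_of_finrank_le hRleP (by rw [hP, hR1]))
    -- counting the complement of R ∪ P
    have hAB : (Finset.univ.filter (fun v : V => v ∈ R ∧ v ∈ P)).card = 1 := by
      have heq : Finset.univ.filter (fun v : V => v ∈ R ∧ v ∈ P)
          = Finset.univ.filter (fun v : V => v ∈ R ⊓ P) := by
        ext v
        simp [Submodule.mem_inf]
      rw [heq, card_filter_mem, hRPbot, finrank_bot, pow_zero]
    have hunion : (Finset.univ.filter (fun v : V => v ∈ R ∨ v ∈ P)).card = 2 * q - 1 := by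
      have h := Finset.card_union_add_card_inter
        (Finset.univ.filter (fun v : V => v ∈ R)) (Finset.univ.filter (fun v : V => v ∈ P))
      rw [← Finset.filter_or, ← Finset.filter_and, hAB, card_filter_mem, card_filter_mem,
        hR1, hP, hF, pow_one] at h
      omega
    have hcompl : (Finset.univ.filter (fun v : V => v ∉ R ∧ v ∉ P)).card
        = q ^ 7 - (2 * q - 1) := by
      have hsd : Finset.univ.filter (fun v : V => v ∉ R ∧ v ∉ P)
          = Finset.univ \ Finset.univ.filter (fun v : V => v ∈ R ∨ v ∈ P) := by
        ext v
        simp only [Finset.mem_filter, Finset.mem_sdiff, Finset.mem_univ, true_and]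
        tauto
      rw [hsd, Finset.card_sdiff_of_subset (Finset.filter_subset _ _), hunion, Finset.card_univ, hcardV]
    -- put the counting together
    have hbound : T.card * (q ^ 3 - q) ≤ q ^ 7 - (2 * q - 1) := by
      rw [← hcb, ← hcompl]
      exact Finset.card_le_card hsub
    by_contra hgt
    push_neg at hgt
    have hT1 : q ^ 4 + q ^ 2 + 1 ≤ T.card := hgt
    have hq3 : q ≤ q ^ 3 := Nat.le_self_pow (by norm_num) q
    have hq7 : q ≤ q ^ 7 := Nat.le_self_pow (by norm_num) q
    have hqq7 : 2 * q - 1 ≤ q ^ 7 := by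
      have h2 : 2 * q ≤ q * q := by nlinarith
      have h3 : q * q ≤ q ^ 7 := by
        calc q * q = q ^ 2 := by ring
          _ ≤ q ^ 7 := Nat.pow_le_pow_right (by omega) (by norm_num)
      omega
    have he1 : (q ^ 4 + q ^ 2 + 1) * (q ^ 3 - q) = q ^ 7 - q := by
      zify [hq3, hq7]
      ring
    have hchain : q ^ 7 - q ≤ q ^ 7 - (2 * q - 1) := by
      calc q ^ 7 - q = (q ^ 4 + q ^ 2 + 1) * (q ^ 3 - q) := he1.symm
        _ ≤ T.card * (q ^ 3 - q) := Nat.mul_le_mul_right _ hT1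
        _ ≤ q ^ 7 - (2 * q - 1) := hbound
    omega
  -- finish: sum over points other than P
  intro Q hQ1 hQP
  have hPpts : P ∈ pts := by simp [hpts, hP]; exact hP
  have hQpts : Q ∈ pts.erase P := by simp [hpts, hQ1, hQP]; exact hQ1
  have hP0 : (C₃.filter fun X => P ≤ X).card = 0 := by
    rw [Finset.card_eq_zero, Finset.filter_eq_empty_iff]
    exact hPfree
  have hsum' : ∑ R ∈ pts.erase P, (C₃.filter fun X => R ≤ X).card
      = C₃.card * (∑ i ∈ Finset.range 3, q ^ i) := by
    rw [← hsum, ← Finset.add_sum_erase pts _ hPpts, hP0, zero_add]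
  -- the count of all points
  have hptscard : pts.card = ∑ i ∈ Finset.range 7, q ^ i := by
    have h := points_count (F := F) (⊤ : Submodule F V) (by omega : 2 ≤ Fintype.card F)
    have htop : finrank F ↥(⊤ : Submodule F V) = 7 := by rw [finrank_top, hrankV]
    rw [htop, hF] at h
    rw [hpts]
    rw [← h]
    congr 1
    ext R
    simp
  have herase : (pts.erase P).card = ∑ i ∈ Finset.range 6, q ^ (i + 1) := by
    rw [Finset.card_erase_of_mem hPpts, hptscard, Finset.sum_range_succ']
    simp
  -- the key arithmetic identity
  have hkey : C₃.card * (∑ i ∈ Finset.range 3, q ^ i)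
      = (pts.erase P).card * (q ^ 4 + q ^ 2) := by
    rw [hcard, herase]
    simp only [Finset.sum_range_succ, Finset.sum_range_zero]
    ring
  -- each point ≠ P lies on at most q^4+q^2 planes, and the total forces equality
  by_contra hne
  have hQub := hub Q hQ1 hQP
  have hQlt : (C₃.filter fun X => Q ≤ X).card < q ^ 4 + q ^ 2 := lt_of_le_of_ne hQub hne
  have hlt : ∑ R ∈ pts.erase P, (C₃.filter fun X => R ≤ X).card
      < ∑ _R ∈ pts.erase P, (q ^ 4 + q ^ 2) := by
    refine Finset.sum_lt_sum (fun R hR => ?_) ⟨Q, hQpts, hQlt⟩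
    have hR' := Finset.mem_erase.1 hR
    have hR1 : finrank F ↥R = 1 := by
      have := (Finset.mem_filter.1 hR'.2).2
      exact this
    exact hub R hR1 hR'.1
  rw [hsum', Finset.sum_const, smul_eq_mul, ← hkey] at hlt
  exact lt_irrefl _ hlt
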